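/- The generating function C(t,z) = ∑_{n≥0} C_n(t) z^n of Narayana polynomials satisfies the functional equation t z C(t,z)^2 = C(t,z) - 1 - z C(t,z) + t z C(t,z), as formal power series in z over the polynomial ring in t. -/

import Mathlib

open Finset PowerSeries

/-- Narayana polynomial `C_n(t)` as a polynomial in `t`. -/
noncomputable def narayanaPoly (n : ℕ) : Polynomial ℚ :=
  if n = 0 then 1
  else ∑ k ∈ range n,
    (((n - 1).choose k * n.choose k : ℚ) / (k + 1)) • Polynomial.X ^ k


/-- Vandermonde hockey stick: `∑_{x+y=M} C(x,p) C(y,q) = C(M+1, p+q+1)`. -/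
lemma vand_hockey : ∀ (M p q : ℕ),
    ∑ x ∈ range (M + 1), x.choose p * (M - x).choose q = (M + 1).choose (p + q + 1) := by
  intro M
  induction M with
  | zero =>
    intro p q
    cases p <;> cases q <;> simp [Nat.choose_eq_zero_of_lt, Nat.choose]
  | succ M ih =>
    intro p q
    rw [Finset.sum_range_succ']
    have h1 : ∀ i ∈ range (M + 1), (i + 1).choose p * (M + 1 - (i + 1)).choose q
        = (i + 1).choose p * (M - i).choose q := by
      intro i _; congr 2; omega
    rw [Finset.sum_congr rfl h1]
    cases p with
    | zero =>
      simp only [Nat.choose_zero_right, one_mul]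
      have : ∑ i ∈ range (M + 1), (M - i).choose q
          = ∑ i ∈ range (M + 1), i.choose 0 * (M - i).choose q := by
        simp
      rw [this, ih 0 q]
      have : (M + 1 + 1).choose (0 + q + 1) = (M+1).choose q + (M+1).choose (q+1) := by
        rw [Nat.zero_add, Nat.choose_succ_succ]
      rw [this]
      simp [Nat.add_comm]
    | succ p' =>
      have h2 : ∀ i ∈ range (M + 1), (i + 1).choose (p' + 1) * (M - i).choose q
          = i.choose p' * (M - i).choose q + i.choose (p' + 1) * (M - i).choose q := by
        intro i _; rw [Nat.choose_succ_succ, Nat.add_mul]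
      rw [Finset.sum_congr rfl h2, Finset.sum_add_distrib, ih p' q, ih (p' + 1) q]
      have h0 : Nat.choose 0 (p' + 1) * (M + 1 - 0).choose q = 0 := by
        simp
      rw [h0, add_zero]
      rw [show p' + 1 + q + 1 = (p' + q + 1) + 1 by omega, Nat.choose_succ_succ (M + 1) (p' + q + 1)]
  
/-- Shifted version: `∑_{i=0}^{m} C(i+a, 2a) C(m-i+b, 2b) = C(m+a+b+1, 2a+2b+1)`. -/
lemma sum_shift (m a b : ℕ) :
    ∑ i ∈ range (m + 1), (i + a).choose (2 * a) * ((m - i) + b).choose (2 * b)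
      = (m + a + b + 1).choose (2 * a + 2 * b + 1) := by
  have key := vand_hockey (a + m + b) (2 * a) (2 * b)
  rw [range_eq_Ico] at key
  rw [← Finset.sum_Ico_consecutive (fun x => x.choose (2*a) * (a + m + b - x).choose (2*b))
      (Nat.zero_le a) (by omega : a ≤ a + m + b + 1)] at key
  rw [← Finset.sum_Ico_consecutive (fun x => x.choose (2*a) * (a + m + b - x).choose (2*b))
      (by omega : a ≤ a + (m+1)) (by omega : a + (m+1) ≤ a + m + b + 1)] at key
  have hz1 : ∑ x ∈ Finset.Ico 0 a,
      x.choose (2*a) * (a + m + b - x).choose (2*b) = 0 := by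
    apply Finset.sum_eq_zero
    intro x hx
    rw [Finset.mem_Ico] at hx
    rw [Nat.choose_eq_zero_of_lt (by omega)]
    ring
  have hz2 : ∑ x ∈ Finset.Ico (a + (m+1)) (a + m + b + 1),
      x.choose (2*a) * (a + m + b - x).choose (2*b) = 0 := by
    apply Finset.sum_eq_zero
    intro x hx
    rw [Finset.mem_Ico] at hx
    rw [Nat.choose_eq_zero_of_lt (n := a + m + b - x) (by omega)]
    ring
  rw [hz1, hz2, zero_add, add_zero] at key
  rw [Finset.sum_Ico_eq_sum_range] at key
  simp only [show a + (m+1) - a = m + 1 by omega] at key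
  rw [show m + a + b + 1 = a + m + b + 1 by omega, ← key]
  apply Finset.sum_congr rfl
  intro i hi
  rw [Finset.mem_range] at hi
  congr 2
  · omega
  · omega

section P2
open Nat

lemma sum_vand (n j : ℕ) :
    ∑ k ∈ range (j + 1), j.choose k * n.choose (k + 1) = (j + n).choose (j + 1) := by
  have h : (j + n).choose (j + 1) = ∑ x ∈ range (j + 2), j.choose x * n.choose (j + 1 - x) := by
    rw [Nat.add_choose_eq, Finset.Nat.sum_antidiagonal_eq_sum_range_succ_mk]
  rw [h]
  conv_rhs => rw [Finset.sum_range_succ]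
  rw [Nat.choose_succ_self, Nat.zero_mul, add_zero]
  conv_rhs => rw [← Finset.sum_range_reflect]
  apply Finset.sum_congr rfl
  intro k hk
  rw [Finset.mem_range] at hk
  rw [show j + 1 - 1 - k = j - k by omega, Nat.choose_symm (by omega : k ≤ j),
    show j + 1 - (j - k) = k + 1 by omega]

lemma cast_identity (n j : ℕ) (hn : 1 ≤ n) (hj : j ≤ n) :
    (n.choose j : ℚ) * ((j + n).choose (j + 1) : ℚ) * (j + 1)
      = (n : ℚ) * ((2 * j).choose j : ℚ) * ((n + j).choose (2 * j) : ℚ) := by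
  rw [Nat.cast_choose ℚ hj, Nat.cast_choose ℚ (by omega : j + 1 ≤ j + n),
    Nat.cast_choose ℚ (by omega : j ≤ 2 * j), Nat.cast_choose ℚ (by omega : 2 * j ≤ n + j)]
  have h1 : j + n - (j + 1) = n - 1 := by omega
  have h2 : 2 * j - j = j := by omega
  have h3 : n + j - 2 * j = n - j := by omega
  rw [h1, h2, h3]
  have hnf : (n ! : ℚ) = (n : ℚ) * ((n - 1)! : ℚ) := by
    rw [show n = n - 1 + 1 by omega, Nat.factorial_succ]
    push_cast
    ring
  have hjf : ((j + 1)! : ℚ) = ((j : ℚ) + 1) * (j ! : ℚ) := by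
    rw [Nat.factorial_succ]; push_cast; ring
  have hnj : (n + j)! = (j + n)! := by rw [Nat.add_comm]
  rw [hnf, hjf, hnj]
  have f0 : (j ! : ℚ) ≠ 0 := by exact_mod_cast Nat.factorial_ne_zero j
  have f1 : ((n - j)! : ℚ) ≠ 0 := by exact_mod_cast Nat.factorial_ne_zero (n - j)
  have f2 : ((n - 1)! : ℚ) ≠ 0 := by exact_mod_cast Nat.factorial_ne_zero (n - 1)
  have f3 : ((2 * j)! : ℚ) ≠ 0 := by exact_mod_cast Nat.factorial_ne_zero (2 * j)
  have f4 : (j : ℚ) + 1 ≠ 0 := by positivity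
  field_simp

/-- The key identity: expansion coefficients of Narayana in the `t^j (1-t)^{n-j}` basis. -/
lemma narayana_expand (n j : ℕ) (hn : 1 ≤ n) (hj : j ≤ n) :
    ∑ k ∈ range (j + 1),
        (((n - 1).choose k * n.choose k : ℚ) / (k + 1)) * ((n - k).choose (j - k) : ℚ)
      = (catalan j : ℚ) * ((n + j).choose (2 * j) : ℚ) := by
  have hterm : ∀ k ∈ range (j + 1),
      (((n - 1).choose k * n.choose k : ℚ) / (k + 1)) * ((n - k).choose (j - k) : ℚ)
        = (n.choose j : ℚ) / n * ((j.choose k * n.choose (k + 1) : ℕ) : ℚ) := by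
    intro k hk
    rw [Finset.mem_range] at hk
    have hkj : k ≤ j := by omega
    have hmulQ : (n.choose j : ℚ) * (j.choose k : ℚ)
        = (n.choose k : ℚ) * ((n - k).choose (j - k) : ℚ) := by
      exact_mod_cast congrArg (Nat.cast (R := ℚ)) (Nat.choose_mul (n := n) hkj)
    have hsuccQ : (n : ℚ) * ((n - 1).choose k : ℚ) = (n.choose (k + 1) : ℚ) * ((k : ℚ) + 1) := by
      have h := Nat.add_one_mul_choose_eq (n - 1) k
      rw [show n - 1 + 1 = n by omega] at h
      exact_mod_cast congrArg (Nat.cast (R := ℚ)) h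
    have hn0 : (n : ℚ) ≠ 0 := by positivity
    have hk0 : (k : ℚ) + 1 ≠ 0 := by positivity
    push_cast
    field_simp
    linear_combination ((n.choose k : ℚ) * ((n - k).choose (j - k) : ℚ)) * hsuccQ
      - ((n.choose (k+1) : ℚ) * ((k:ℚ)+1)) * hmulQ
  rw [Finset.sum_congr rfl hterm, ← Finset.mul_sum, ← Nat.cast_sum, sum_vand n j]
  have hcatN : (j + 1) * catalan j = (2 * j).choose j := by
    have h := succ_mul_catalan_eq_centralBinom j
    rwa [Nat.centralBinom] at h
  have hcat : ((j : ℚ) + 1) * (catalan j : ℚ) = ((2 * j).choose j : ℚ) := by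
    exact_mod_cast congrArg (Nat.cast (R := ℚ)) hcatN
  have hn0 : (n : ℚ) ≠ 0 := by positivity
  have hj0 : (j : ℚ) + 1 ≠ 0 := by positivity
  have key := cast_identity n j hn hj
  have key2 : ((n.choose j : ℚ) * ((j + n).choose (j + 1) : ℚ)) * ((j : ℚ) + 1)
      = ((n : ℚ) * (catalan j : ℚ) * ((n + j).choose (2 * j) : ℚ)) * ((j : ℚ) + 1) := by
    linear_combination key - ((n : ℚ) * ((n + j).choose (2 * j) : ℚ)) * hcat
  have key3 := mul_right_cancel₀ hj0 key2
  field_simp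
  linear_combination key3

end P2
noncomputable def Rpoly (n : ℕ) : Polynomial ℚ :=
  ∑ j ∈ range (n + 1),
    Polynomial.C ((catalan j * (n + j).choose (2 * j) : ℕ) : ℚ) *
      (Polynomial.X ^ j * (1 - Polynomial.X) ^ (n - j))

lemma tri_swap {M : Type*} [AddCommMonoid M] (n : ℕ) (F : ℕ → ℕ → M) :
    ∑ k ∈ range (n + 1), ∑ i ∈ range (n + 1 - k), F k (k + i)
      = ∑ j ∈ range (n + 1), ∑ k ∈ range (j + 1), F k j := by
  have h1 : ∀ k, ∑ i ∈ range (n + 1 - k), F k (k + i) = ∑ j ∈ Finset.Ico k (n + 1), F k j := by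
    intro k
    rw [Finset.sum_Ico_eq_sum_range]
  simp only [h1]
  simp only [range_eq_Ico]
  rw [Finset.sum_Ico_Ico_comm]

set_option maxHeartbeats 1000000 in
lemma narayana_eq_Rpoly (n : ℕ) : narayanaPoly n = Rpoly n := by
  rcases Nat.eq_zero_or_pos n with h0 | hn
  · subst h0
    simp [narayanaPoly, Rpoly]
  have hn' : n ≠ 0 := by omega
  rw [narayanaPoly, if_neg hn']
  have step0 : (∑ k ∈ range n, (((n - 1).choose k * n.choose k : ℚ) / (k + 1)) • Polynomial.X ^ k)
      = ∑ k ∈ range (n + 1),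
          Polynomial.C (((n - 1).choose k * n.choose k : ℚ) / (k + 1)) * Polynomial.X ^ k := by
    rw [Finset.sum_range_succ]
    rw [Nat.choose_eq_zero_of_lt (by omega : n - 1 < n)]
    simp [Polynomial.smul_eq_C_mul]
  rw [step0]
  have step1 : ∀ k ∈ range (n + 1),
      Polynomial.C (((n - 1).choose k * n.choose k : ℚ) / (k + 1)) * Polynomial.X ^ k
        = ∑ i ∈ range (n + 1 - k),
            Polynomial.C ((((n - 1).choose k * n.choose k : ℚ) / (k + 1))
                * ((n - k).choose (k + i - k) : ℚ)) *
              (Polynomial.X ^ (k + i) * (1 - Polynomial.X) ^ (n - (k + i))) := by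
    intro k hk
    rw [Finset.mem_range] at hk
    have hone : (Polynomial.X + (1 - Polynomial.X) : Polynomial ℚ) = 1 := by ring
    have hexp : (Polynomial.X ^ k : Polynomial ℚ)
        = Polynomial.X ^ k * (Polynomial.X + (1 - Polynomial.X)) ^ (n - k) := by
      rw [hone, one_pow, mul_one]
    calc Polynomial.C (((n - 1).choose k * n.choose k : ℚ) / (k + 1)) * Polynomial.X ^ k
        = Polynomial.C (((n - 1).choose k * n.choose k : ℚ) / (k + 1)) *
            (Polynomial.X ^ k * (Polynomial.X + (1 - Polynomial.X)) ^ (n - k)) := by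
          rw [← hexp]
      _ = _ := by
          rw [add_pow, Finset.mul_sum, Finset.mul_sum]
          have hrange : n - k + 1 = n + 1 - k := by omega
          rw [hrange]
          apply Finset.sum_congr rfl
          intro i hi
          rw [Finset.mem_range] at hi
          have h1 : n - k - i = n - (k + i) := by omega
          have h2 : k + i - k = i := by omega
          rw [h1, h2, map_mul, Polynomial.C_eq_natCast]
          ring
  calc (∑ k ∈ range (n + 1),
          Polynomial.C (((n - 1).choose k * n.choose k : ℚ) / (k + 1)) * Polynomial.X ^ k)
      = ∑ k ∈ range (n + 1), ∑ i ∈ range (n + 1 - k),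
          (fun k j => Polynomial.C ((((n - 1).choose k * n.choose k : ℚ) / (k + 1))
              * ((n - k).choose (j - k) : ℚ)) *
            (Polynomial.X ^ j * (1 - Polynomial.X) ^ (n - j))) k (k + i) :=
        Finset.sum_congr rfl step1
    _ = ∑ j ∈ range (n + 1), ∑ k ∈ range (j + 1),
          (fun k j => Polynomial.C ((((n - 1).choose k * n.choose k : ℚ) / (k + 1))
              * ((n - k).choose (j - k) : ℚ)) *
            (Polynomial.X ^ j * (1 - Polynomial.X) ^ (n - j))) k j :=
        tri_swap n (fun k j =>
          Polynomial.C ((((n - 1).choose k * n.choose k : ℚ) / (k + 1))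
              * ((n - k).choose (j - k) : ℚ)) *
            (Polynomial.X ^ j * (1 - Polynomial.X) ^ (n - j)))
    _ = Rpoly n := by
        rw [Rpoly]
        apply Finset.sum_congr rfl
        intro j hj
        rw [Finset.mem_range] at hj
        simp only
        rw [← Finset.sum_mul, ← map_sum]
        congr 2
        rw [narayana_expand n j hn (by omega)]
        push_cast
        ring


/-- Extension of the defining sum of `Rpoly` to a larger range. -/
lemma Rpoly_ext (i m : ℕ) (him : i ≤ m) :
    Rpoly i = ∑ a ∈ range (m + 1),
      Polynomial.C ((catalan a * (i + a).choose (2 * a) : ℕ) : ℚ) *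
        (Polynomial.X ^ a * (1 - Polynomial.X) ^ (i - a)) := by
  rw [Rpoly]
  apply Finset.sum_subset (Finset.range_subset_range.mpr (by omega))
  intro a ha1 ha
  rw [Finset.mem_range] at ha
  rw [Nat.choose_eq_zero_of_lt (by omega : i + a < 2 * a)]
  simp

/-- The convolution identity for `Rpoly`. -/
lemma Rpoly_conv (m : ℕ) :
    ∑ i ∈ range (m + 1), Rpoly i * Rpoly (m - i)
      = ∑ j ∈ range (m + 1),
          Polynomial.C ((catalan (j + 1) * (m + j + 1).choose (2 * j + 1) : ℕ) : ℚ) *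
            (Polynomial.X ^ j * (1 - Polynomial.X) ^ (m - j)) := by
  have step1 : ∀ i ∈ range (m + 1), Rpoly i * Rpoly (m - i)
      = ∑ a ∈ range (m + 1), ∑ b ∈ range (m + 1),
          Polynomial.C ((catalan a * (i + a).choose (2 * a)
              * (catalan b * ((m - i) + b).choose (2 * b)) : ℕ) : ℚ) *
            (Polynomial.X ^ (a + b) * (1 - Polynomial.X) ^ (m - (a + b))) := by
    intro i hi
    rw [Finset.mem_range] at hi
    rw [Rpoly_ext i m (by omega), Rpoly_ext (m - i) m (by omega), Finset.sum_mul_sum]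
    apply Finset.sum_congr rfl
    intro a _
    apply Finset.sum_congr rfl
    intro b _
    by_cases hab : a ≤ i ∧ b ≤ m - i
    · obtain ⟨ha, hb⟩ := hab
      have hexp : m - (a + b) = (i - a) + ((m - i) - b) := by omega
      rw [hexp]
      simp only [Nat.cast_mul, map_mul, pow_add]
      ring
    · rw [not_and_or] at hab
      rcases hab with ha | hb
      · rw [Nat.choose_eq_zero_of_lt (by omega : i + a < 2 * a)]
        simp
      · rw [Nat.choose_eq_zero_of_lt (by omega : (m - i) + b < 2 * b)]
        simp
  rw [Finset.sum_congr rfl step1]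
  rw [Finset.sum_comm]
  have step2 : ∀ a ∈ range (m + 1),
      (∑ i ∈ range (m + 1), ∑ b ∈ range (m + 1),
          Polynomial.C ((catalan a * (i + a).choose (2 * a)
              * (catalan b * ((m - i) + b).choose (2 * b)) : ℕ) : ℚ) *
            (Polynomial.X ^ (a + b) * (1 - Polynomial.X) ^ (m - (a + b))))
        = ∑ b ∈ range (m + 1),
            Polynomial.C ((catalan a * catalan b * (m + a + b + 1).choose (2 * a + 2 * b + 1)
                : ℕ) : ℚ) *
              (Polynomial.X ^ (a + b) * (1 - Polynomial.X) ^ (m - (a + b))) := by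
    intro a _
    rw [Finset.sum_comm]
    apply Finset.sum_congr rfl
    intro b _
    rw [← Finset.sum_mul, ← map_sum, ← Nat.cast_sum]
    congr 2
    apply Nat.cast_inj.mpr
    have h : ∀ i ∈ range (m + 1),
        catalan a * (i + a).choose (2 * a) * (catalan b * ((m - i) + b).choose (2 * b))
          = catalan a * catalan b * ((i + a).choose (2 * a) * ((m - i) + b).choose (2 * b)) :=
      fun i _ => by ring
    rw [Finset.sum_congr rfl h, ← Finset.mul_sum, sum_shift m a b]
  rw [Finset.sum_congr rfl step2]
  have step3 : ∀ a ∈ range (m + 1),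
      (∑ b ∈ range (m + 1),
          Polynomial.C ((catalan a * catalan b * (m + a + b + 1).choose (2 * a + 2 * b + 1)
              : ℕ) : ℚ) *
            (Polynomial.X ^ (a + b) * (1 - Polynomial.X) ^ (m - (a + b))))
        = ∑ b ∈ range (m + 1 - a),
            (fun a j => Polynomial.C ((catalan a * catalan (j - a)
                  * (m + j + 1).choose (2 * j + 1) : ℕ) : ℚ) *
              (Polynomial.X ^ j * (1 - Polynomial.X) ^ (m - j))) a (a + b) := by
    intro a ha
    rw [Finset.mem_range] at ha
    have hz : ∀ b ∈ range (m + 1), b ∉ range (m + 1 - a) →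
        Polynomial.C ((catalan a * catalan b * (m + a + b + 1).choose (2 * a + 2 * b + 1)
            : ℕ) : ℚ) *
          (Polynomial.X ^ (a + b) * (1 - Polynomial.X) ^ (m - (a + b))) = 0 := by
      intro b hb1 hb2
      rw [Finset.mem_range] at hb1 hb2
      rw [Nat.choose_eq_zero_of_lt (by omega : m + a + b + 1 < 2 * a + 2 * b + 1)]
      simp
    rw [← Finset.sum_subset (Finset.range_subset_range.mpr (by omega : m + 1 - a ≤ m + 1)) hz]
    apply Finset.sum_congr rfl
    intro b _
    show _ = Polynomial.C ((catalan a * catalan ((a + b) - a)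
          * (m + (a + b) + 1).choose (2 * (a + b) + 1) : ℕ) : ℚ) *
        (Polynomial.X ^ (a + b) * (1 - Polynomial.X) ^ (m - (a + b)))
    rw [show a + b - a = b from by omega, show m + (a + b) + 1 = m + a + b + 1 from by omega,
      show 2 * (a + b) + 1 = 2 * a + 2 * b + 1 from by omega]
  rw [Finset.sum_congr rfl step3]
  rw [tri_swap m (fun a j => Polynomial.C ((catalan a * catalan (j - a)
        * (m + j + 1).choose (2 * j + 1) : ℕ) : ℚ) *
      (Polynomial.X ^ j * (1 - Polynomial.X) ^ (m - j)))]
  apply Finset.sum_congr rfl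
  intro j hj
  rw [← Finset.sum_mul, ← map_sum, ← Nat.cast_sum]
  congr 2
  apply Nat.cast_inj.mpr
  have h : ∀ a ∈ range (j + 1),
      catalan a * catalan (j - a) * (m + j + 1).choose (2 * j + 1)
        = (catalan a * catalan (j - a)) * (m + j + 1).choose (2 * j + 1) :=
    fun a _ => by ring
  rw [Finset.sum_congr rfl h, ← Finset.sum_mul]
  congr 1
  rw [catalan_succ' j, Finset.Nat.sum_antidiagonal_eq_sum_range_succ_mk]

/-- Pascal-type recurrence for `Rpoly`. -/
lemma Rpoly_rec (m : ℕ) :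
    Rpoly (m + 1) = (1 - Polynomial.X) * Rpoly m
      + Polynomial.X * ∑ i ∈ range (m + 1), Rpoly i * Rpoly (m - i) := by
  rw [Rpoly_conv]
  have hL : Rpoly (m + 1) = (1 - Polynomial.X) ^ (m + 1)
      + ∑ j ∈ range (m + 1),
          Polynomial.C ((catalan (j + 1) * ((m + 1) + (j + 1)).choose (2 * (j + 1)) : ℕ) : ℚ) *
            (Polynomial.X ^ (j + 1) * (1 - Polynomial.X) ^ (m - j)) := by
    rw [Rpoly, Finset.sum_range_succ']
    rw [add_comm]
    congr 1
    · simp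
    · apply Finset.sum_congr rfl
      intro j _
      rw [show m + 1 - (j + 1) = m - j from by omega]
  have hR : (1 - Polynomial.X) * Rpoly m = (1 - Polynomial.X) ^ (m + 1)
      + ∑ j ∈ range (m + 1),
          Polynomial.C ((catalan (j + 1) * (m + (j + 1)).choose (2 * (j + 1)) : ℕ) : ℚ) *
            (Polynomial.X ^ (j + 1) * (1 - Polynomial.X) ^ (m - j)) := by
    rw [Rpoly, Finset.mul_sum]
    have h1 : ∀ j ∈ range (m + 1),
        (1 - Polynomial.X) * (Polynomial.C ((catalan j * (m + j).choose (2 * j) : ℕ) : ℚ) *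
            (Polynomial.X ^ j * (1 - Polynomial.X) ^ (m - j)))
          = Polynomial.C ((catalan j * (m + j).choose (2 * j) : ℕ) : ℚ) *
              (Polynomial.X ^ j * (1 - Polynomial.X) ^ (m + 1 - j)) := by
      intro j hj
      rw [Finset.mem_range] at hj
      rw [show m + 1 - j = (m - j) + 1 from by omega, pow_succ]
      ring
    rw [Finset.sum_congr rfl h1, Finset.sum_range_succ']
    rw [add_comm]
    congr 1
    · simp
    · rw [Finset.sum_range_succ]
      rw [Nat.choose_eq_zero_of_lt (by omega : m + (m + 1) < 2 * (m + 1))]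
      simp only [Nat.mul_zero, Nat.cast_zero, map_zero, zero_mul, add_zero, Nat.cast_ofNat]
      apply Finset.sum_congr rfl
      intro j hj
      rw [Finset.mem_range] at hj
      rw [show m + 1 - (j + 1) = m - j from by omega]
  have hD : Polynomial.X * ∑ j ∈ range (m + 1),
        Polynomial.C ((catalan (j + 1) * (m + j + 1).choose (2 * j + 1) : ℕ) : ℚ) *
          (Polynomial.X ^ j * (1 - Polynomial.X) ^ (m - j))
      = ∑ j ∈ range (m + 1),
          Polynomial.C ((catalan (j + 1) * (m + j + 1).choose (2 * j + 1) : ℕ) : ℚ) *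
            (Polynomial.X ^ (j + 1) * (1 - Polynomial.X) ^ (m - j)) := by
    rw [Finset.mul_sum]
    apply Finset.sum_congr rfl
    intro j _
    rw [pow_succ]
    ring
  rw [hL, hR, hD, add_assoc, ← Finset.sum_add_distrib]
  congr 1
  apply Finset.sum_congr rfl
  intro j _
  rw [← add_mul, ← map_add, ← Nat.cast_add]
  congr 3
  have hp : ((m + 1) + (j + 1)).choose (2 * (j + 1))
      = (m + (j + 1)).choose (2 * (j + 1)) + (m + j + 1).choose (2 * j + 1) := by
    rw [show (m + 1) + (j + 1) = (m + j + 1) + 1 from by omega,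
      show m + (j + 1) = m + j + 1 from by omega,
      show 2 * (j + 1) = (2 * j + 1) + 1 from by omega, Nat.choose_succ_succ]
    exact Nat.add_comm _ _
  rw [hp]
  ring


theorem narayana_gf_functional_equation :
    let f : PowerSeries (Polynomial ℚ) := PowerSeries.mk narayanaPoly
    let T : PowerSeries (Polynomial ℚ) := PowerSeries.C (Polynomial.X : Polynomial ℚ)
    T * X * f ^ 2 = f - 1 - X * f + T * X * f := by
  intro f T
  have hfR : f = PowerSeries.mk Rpoly := congrArg PowerSeries.mk (funext narayana_eq_Rpoly)
  have hT : T = PowerSeries.C (Polynomial.X : Polynomial ℚ) := rfl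
  rw [hfR, hT]
  have hassoc : ∀ g : PowerSeries (Polynomial ℚ),
      PowerSeries.C (Polynomial.X : Polynomial ℚ) * X * g
        = PowerSeries.C (Polynomial.X : Polynomial ℚ) * (X * g) := fun g => mul_assoc _ _ _
  rw [pow_two, hassoc, hassoc]
  ext n
  rw [map_add, map_sub, map_sub, PowerSeries.coeff_C_mul, PowerSeries.coeff_C_mul,
    PowerSeries.coeff_mk, PowerSeries.coeff_one]
  cases n with
  | zero =>
    rw [PowerSeries.coeff_zero_X_mul, PowerSeries.coeff_zero_X_mul]
    simp [Rpoly]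
  | succ m =>
    rw [PowerSeries.coeff_succ_X_mul, PowerSeries.coeff_succ_X_mul, PowerSeries.coeff_mul,
      PowerSeries.coeff_mk, if_neg (Nat.succ_ne_zero m),
      Finset.Nat.sum_antidiagonal_eq_sum_range_succ_mk]
    simp only [PowerSeries.coeff_mk]
    rw [Rpoly_rec m]
    simp only [Nat.succ_eq_add_one, sub_zero]
    congr 1
    ring
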